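/- For all a₁, a₂, a₃, b₁, b₂, b₃ ≥ 0, if (a, b) is T-admissible, then b₁·a₂·a₃ ≤ 8/27. -/
import Mathlib


/-- The set `T = {x ∈ ℝ³ : 0 ≤ xₖ ≤ 1 for each k, and x₁+x₂+x₃ ≤ 2}`. -/
def T : Set (ℝ × ℝ × ℝ) :=
  {x | 0 ≤ x.1 ∧ x.1 ≤ 1 ∧ 0 ≤ x.2.1 ∧ x.2.1 ≤ 1 ∧ 0 ≤ x.2.2 ∧ x.2.2 ≤ 1 ∧
    x.1 + x.2.1 + x.2.2 ≤ 2}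

/-- `(a, b)` is `T`-admissible. -/
def Admissible (a b : ℝ × ℝ × ℝ) : Prop :=
  ∀ u ∈ T, ∀ v ∈ T,
    (a.1 * u.1 + b.1 * v.1, a.2.1 * u.2.1 + b.2.1 * v.2.1,
      a.2.2 * u.2.2 + b.2.2 * v.2.2) ∈ T

theorem stmt_8 (a₁ a₂ a₃ b₁ b₂ b₃ : ℝ)
    (ha₁ : 0 ≤ a₁) (ha₂ : 0 ≤ a₂) (ha₃ : 0 ≤ a₃)
    (hb₁ : 0 ≤ b₁) (hb₂ : 0 ≤ b₂) (hb₃ : 0 ≤ b₃)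
    (hadm : Admissible (a₁, a₂, a₃) (b₁, b₂, b₃)) :
    b₁ * a₂ * a₃ ≤ 8 / 27 := by
  have h := hadm (0, 1, 1) (by norm_num [T]) (1, 0, 0) (by norm_num [T])
  simp only [T, Set.mem_setOf_eq] at h
  obtain ⟨h1, h2, h3, h4, h5, h6, h7⟩ := h
  nlinarith [sq_nonneg (a₂ - a₃), sq_nonneg (b₁ - a₂), sq_nonneg (b₁ - a₃),
    sq_nonneg (b₁ + a₂ + a₃), mul_nonneg hb₁ ha₂, mul_nonneg ha₂ ha₃,
    mul_nonneg hb₁ ha₃, mul_nonneg (mul_nonneg hb₁ ha₂) ha₃]
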